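/- arXiv:1307.7516 — 3 statements merged into one kernel-verified Lean document; each statement's English description precedes it below -/
import Mathlib

section
/- The map F = (J,H) : TS² → ℝ² of the spherical pendulum, where J(q,p) = q₁p₂ − q₂p₁ and H(q,p) = (p₁²+p₂²+p₃²)/2 + q₃, is a proper map. -/
open Set

noncomputable section

/-- The tangent bundle of the unit sphere, realized as a subset of `ℝ³ × ℝ³`. -/
def TS2 : Set (EuclideanSpace ℝ (Fin 3) × EuclideanSpace ℝ (Fin 3)) :=
  {qp | ‖qp.1‖ = 1 ∧ (inner ℝ qp.1 qp.2 : ℝ) = 0}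

/-- The momentum map of the spherical pendulum, `J(q,p) = q₁p₂ − q₂p₁`. -/
def Jpend (qp : EuclideanSpace ℝ (Fin 3) × EuclideanSpace ℝ (Fin 3)) : ℝ :=
  qp.1 0 * qp.2 1 - qp.1 1 * qp.2 0

/-- The Hamiltonian of the spherical pendulum, `H(q,p) = ‖p‖²/2 + q₃`. -/
def Hpend (qp : EuclideanSpace ℝ (Fin 3) × EuclideanSpace ℝ (Fin 3)) : ℝ :=
  (qp.2 0 ^ 2 + qp.2 1 ^ 2 + qp.2 2 ^ 2) / 2 + qp.1 2

lemma coord_cont1 (i : Fin 3) :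
    Continuous fun qp : EuclideanSpace ℝ (Fin 3) × EuclideanSpace ℝ (Fin 3) => qp.1 i :=
  (EuclideanSpace.proj i).continuous.comp continuous_fst

lemma coord_cont2 (i : Fin 3) :
    Continuous fun qp : EuclideanSpace ℝ (Fin 3) × EuclideanSpace ℝ (Fin 3) => qp.2 i :=
  (EuclideanSpace.proj i).continuous.comp continuous_snd

lemma Jpend_cont : Continuous Jpend :=
  ((coord_cont1 0).mul (coord_cont2 1)).sub ((coord_cont1 1).mul (coord_cont2 0))

lemma Hpend_cont : Continuous Hpend := by
  unfold Hpend
  exact ((((((coord_cont2 0).pow 2).add ((coord_cont2 1).pow 2)).add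
    ((coord_cont2 2).pow 2)).div_const 2).add (coord_cont1 2))

lemma TS2_closed : IsClosed TS2 := by
  rw [TS2, setOf_and]
  exact (isClosed_eq (continuous_norm.comp continuous_fst) continuous_const).inter
    (isClosed_eq continuous_inner continuous_const)

lemma abs_coord_le_norm (q : EuclideanSpace ℝ (Fin 3)) (i : Fin 3) : |q i| ≤ ‖q‖ := by
  have := EuclideanSpace.norm_eq q
  rw [this]
  have h1 : |q i| = Real.sqrt (‖q i‖ ^ 2) := by
    rw [Real.sqrt_sq_eq_abs]; simp
  rw [h1]
  apply Real.sqrt_le_sqrt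
  exact Finset.single_le_sum (f := fun j => ‖q j‖ ^ 2) (fun j _ => by positivity)
    (Finset.mem_univ i)

lemma norm_sq_eq (p : EuclideanSpace ℝ (Fin 3)) :
    ‖p‖ = Real.sqrt (p 0 ^ 2 + p 1 ^ 2 + p 2 ^ 2) := by
  rw [EuclideanSpace.norm_eq, Fin.sum_univ_three]
  simp [sq_abs, Real.norm_eq_abs]

/-- The map `F = (J,H) : TS² → ℝ²` of the spherical pendulum is proper. -/
theorem pendulum_F_proper :
    IsProperMap (TS2.restrict fun qp => (Jpend qp, Hpend qp)) := by
  rw [isProperMap_iff_isCompact_preimage]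
  refine ⟨((Jpend_cont.prodMk Hpend_cont).comp continuous_subtype_val), ?_⟩
  intro K hK
  obtain ⟨r, hr0, hrK⟩ := hK.isBounded.subset_closedBall_lt 0 0
  set S : Set (EuclideanSpace ℝ (Fin 3) × EuclideanSpace ℝ (Fin 3)) :=
    TS2 ∩ ((fun qp => (Jpend qp, Hpend qp)) ⁻¹' K) with hSdef
  have hScl : IsClosed S :=
    TS2_closed.inter (hK.isClosed.preimage (Jpend_cont.prodMk Hpend_cont))
  have hSbd : Bornology.IsBounded S := by
    apply Metric.isBounded_closedBall (x := (0 : EuclideanSpace ℝ (Fin 3) ×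
      EuclideanSpace ℝ (Fin 3))) (r := max 1 (Real.sqrt (2 * (r + 1)))) |>.subset
    intro qp ⟨⟨hq, _⟩, hFK⟩
    have hH : Hpend qp ≤ r := by
      have h1 := hrK hFK
      rw [Metric.mem_closedBall, dist_zero_right] at h1
      exact le_trans (le_trans (le_abs_self _) (norm_snd_le (Jpend qp, Hpend qp))) h1
    have hq3 : -qp.1 2 ≤ 1 := by
      have := abs_coord_le_norm qp.1 2
      rw [hq] at this
      linarith [neg_abs_le (qp.1 2)]
    have hpsq : qp.2 0 ^ 2 + qp.2 1 ^ 2 + qp.2 2 ^ 2 ≤ 2 * (r + 1) := by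
      have : (qp.2 0 ^ 2 + qp.2 1 ^ 2 + qp.2 2 ^ 2) / 2 + qp.1 2 ≤ r := hH
      linarith
    have hpn : ‖qp.2‖ ≤ Real.sqrt (2 * (r + 1)) := by
      rw [norm_sq_eq]
      exact Real.sqrt_le_sqrt hpsq
    rw [Metric.mem_closedBall, dist_zero_right, Prod.norm_def]
    exact max_le (hq.le.trans (le_max_left _ _)) (hpn.trans (le_max_right _ _))
  have hScpt : IsCompact S := Metric.isCompact_of_isClosed_isBounded hScl hSbd
  have hpre : (TS2.restrict fun qp => (Jpend qp, Hpend qp)) ⁻¹' K = Subtype.val ⁻¹' S := by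
    ext x
    simp [hSdef, Set.restrict, x.2]
  rw [hpre]
  exact TS2_closed.isClosedEmbedding_subtypeVal.isCompact_preimage hScpt
end
end

section
/- Let Ω = [−1,1]×[−1,1] \ ({0}×[0,1]) and let h : [−1,1] → ℝ be continuous with h ≥ 0 and h(z) = 0 if and only if z ≥ 0. Define g : Ω → ℝ² by g(z₁,z₂) = (z₁, (z₂+2)/(z₁²+h(z₂))). Then for all real numbers 0 < a ≤ b, the preimage g⁻¹([−1,1]×[a,b]) is a compact subset of ℝ²; indeed it is contained in the compact set Ω_b = {(z₁,z₂) ∈ Ω : z₁² ≥ 1/(2b) or h(z₂) ≥ 1/(2b)}. -/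
open Set

noncomputable section

/-- `Ω = [−1,1]×[−1,1] \ ({0}×[0,1])`. -/
def Omeg : Set (ℝ × ℝ) :=
  (Icc (-1 : ℝ) 1 ×ˢ Icc (-1 : ℝ) 1) \ ({0} ×ˢ Icc (0 : ℝ) 1)

/-- Let `h : [−1,1] → ℝ` be continuous with `h ≥ 0` and `h(z) = 0 ↔ z ≥ 0`, and let
`g(z₁,z₂) = (z₁,(z₂+2)/(z₁²+h(z₂)))` on `Ω`. Then for all `0 < a ≤ b`, the preimage
`g⁻¹([−1,1]×[a,b])` (within `Ω`) is contained in the compact set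
`Ω_b = {(z₁,z₂) ∈ Ω : z₁² ≥ 1/(2b) or h(z₂) ≥ 1/(2b)}`, and is itself compact. -/
theorem g_preimage_compact (h : ℝ → ℝ)
    (hcont : ContinuousOn h (Icc (-1 : ℝ) 1))
    (hnn : ∀ z ∈ Icc (-1 : ℝ) 1, 0 ≤ h z)
    (hzero : ∀ z ∈ Icc (-1 : ℝ) 1, (h z = 0 ↔ 0 ≤ z))
    (a b : ℝ) (ha : 0 < a) (hab : a ≤ b) :
    let g : ℝ × ℝ → ℝ × ℝ := fun p => (p.1, (p.2 + 2) / (p.1 ^ 2 + h p.2))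
    let Omegb : Set (ℝ × ℝ) := {p ∈ Omeg | 1 / (2 * b) ≤ p.1 ^ 2 ∨ 1 / (2 * b) ≤ h p.2}
    (Omeg ∩ g ⁻¹' (Icc (-1 : ℝ) 1 ×ˢ Icc a b) ⊆ Omegb) ∧
    IsCompact Omegb ∧
    IsCompact (Omeg ∩ g ⁻¹' (Icc (-1 : ℝ) 1 ×ˢ Icc a b)) := by
  intro g Omegb
  have hb : 0 < b := ha.trans_le hab
  have hc : 0 < 1 / (2 * b) := by positivity
  -- Part 1: the subset claim
  have hsub : Omeg ∩ g ⁻¹' (Icc (-1 : ℝ) 1 ×ˢ Icc a b) ⊆ Omegb := by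
    rintro p ⟨hpΩ, hpg⟩
    obtain ⟨⟨hp1, hp2⟩, hns⟩ := hpΩ
    have hgp2 : (p.2 + 2) / (p.1 ^ 2 + h p.2) ∈ Icc a b := hpg.2
    have hDnn : 0 ≤ p.1 ^ 2 + h p.2 := add_nonneg (sq_nonneg _) (hnn _ hp2)
    have hDpos : 0 < p.1 ^ 2 + h p.2 := by
      rcases hDnn.lt_or_eq with h' | h'
      · exact h'
      · exfalso
        have h0 : (p.2 + 2) / (p.1 ^ 2 + h p.2) = 0 := by rw [← h', div_zero]
        have := hgp2.1
        rw [h0] at this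
        linarith
    have hnum : (1 : ℝ) ≤ p.2 + 2 := by have := hp2.1; linarith
    have hle : p.2 + 2 ≤ b * (p.1 ^ 2 + h p.2) := (div_le_iff₀ hDpos).mp hgp2.2
    have hDge : 1 / b ≤ p.1 ^ 2 + h p.2 := by
      rw [div_le_iff₀ hb]; nlinarith
    refine ⟨⟨⟨hp1, hp2⟩, hns⟩, ?_⟩
    by_contra hcon
    push_neg at hcon
    have h2c : 1 / b = 2 * (1 / (2 * b)) := by field_simp
    obtain ⟨h1, h2⟩ := hcon
    rw [h2c] at hDge
    linarith
  -- Part 2: compactness of Omegb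
  have hK : IsCompact {z ∈ Icc (-1 : ℝ) 1 | 1 / (2 * b) ≤ h z} := by
    have hcl : IsClosed (Icc (-1 : ℝ) 1 ∩ h ⁻¹' Ici (1 / (2 * b))) :=
      hcont.preimage_isClosed_of_isClosed isClosed_Icc isClosed_Ici
    exact isCompact_Icc.of_isClosed_subset hcl inter_subset_left
  have hA : IsCompact ((Icc (-1 : ℝ) 1 ×ˢ Icc (-1 : ℝ) 1) ∩ {p : ℝ × ℝ | 1 / (2 * b) ≤ p.1 ^ 2}) := by
    refine (isCompact_Icc.prod isCompact_Icc).inter_right ?_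
    exact isClosed_le continuous_const ((continuous_fst.pow 2))
  have hB : IsCompact ((Icc (-1 : ℝ) 1) ×ˢ {z ∈ Icc (-1 : ℝ) 1 | 1 / (2 * b) ≤ h z}) :=
    isCompact_Icc.prod hK
  have hOeq : Omegb = ((Icc (-1 : ℝ) 1 ×ˢ Icc (-1 : ℝ) 1) ∩ {p : ℝ × ℝ | 1 / (2 * b) ≤ p.1 ^ 2})
      ∪ ((Icc (-1 : ℝ) 1) ×ˢ {z ∈ Icc (-1 : ℝ) 1 | 1 / (2 * b) ≤ h z}) := by
    ext p
    constructor
    · rintro ⟨⟨hpsq, -⟩, hcond⟩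
      rcases hcond with h1 | h2
      · exact Or.inl ⟨hpsq, h1⟩
      · exact Or.inr ⟨hpsq.1, hpsq.2, h2⟩
    · rintro (⟨hpsq, h1⟩ | ⟨hp1, hp2, h2⟩)
      · refine ⟨⟨hpsq, ?_⟩, Or.inl h1⟩
        rintro ⟨hz, -⟩
        simp only [mem_singleton_iff] at hz
        rw [Set.mem_setOf_eq, hz] at h1
        have h0 : (0:ℝ) ^ 2 = 0 := by norm_num
        rw [h0] at h1
        linarith
      · refine ⟨⟨⟨hp1, hp2⟩, ?_⟩, Or.inr h2⟩
        rintro ⟨-, hz2⟩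
        have : h p.2 = 0 := (hzero _ hp2).mpr hz2.1
        rw [this] at h2
        linarith
  have hOmegbC : IsCompact Omegb := by rw [hOeq]; exact hA.union hB
  refine ⟨hsub, hOmegbC, ?_⟩
  -- Part 3: compactness of the preimage
  have hOsub : Omegb ⊆ Omeg := fun p hp => hp.1
  have hmaps : ∀ p ∈ Omegb, p.2 ∈ Icc (-1 : ℝ) 1 := fun p hp => hp.1.1.2
  have hgcont : ContinuousOn g Omegb := by
    apply ContinuousOn.prodMk continuousOn_fst
    apply ContinuousOn.div
    · exact (continuous_snd.add continuous_const).continuousOn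
    · exact ((continuous_fst.pow 2).continuousOn).add (hcont.comp continuous_snd.continuousOn hmaps)
    · intro p hp
      have hD : 0 < p.1 ^ 2 + h p.2 := by
        rcases hp.2 with h1 | h2
        · have := hnn _ (hmaps p hp); linarith
        · have := sq_nonneg p.1; linarith
      exact hD.ne'
  have hSeq : Omeg ∩ g ⁻¹' (Icc (-1 : ℝ) 1 ×ˢ Icc a b)
      = Omegb ∩ g ⁻¹' (Icc (-1 : ℝ) 1 ×ˢ Icc a b) := by
    apply Subset.antisymm
    · intro p hp; exact ⟨hsub hp, hp.2⟩
    · intro p hp; exact ⟨hOsub hp.1, hp.2⟩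
  rw [hSeq]
  have hScl : IsClosed (Omegb ∩ g ⁻¹' (Icc (-1 : ℝ) 1 ×ˢ Icc a b)) :=
    hgcont.preimage_isClosed_of_isClosed hOmegbC.isClosed (isClosed_Icc.prod isClosed_Icc)
  exact hOmegbC.of_isClosed_subset hScl inter_subset_left
end
end

section
/- Let Ω = [−1,1]×[−1,1] \ ({0}×[0,1]) and let h : [−1,1] → ℝ be continuous, nonincreasing on [−1,1], with h ≥ 0 and h(z) = 0 if and only if z ≥ 0. Define g : Ω → ℝ² by g(z₁,z₂) = (z₁, (z₂+2)/(z₁²+h(z₂))). Then g(Ω) = {(x,y) ∈ ℝ² : 0 < |x| ≤ 1 and 1/(x²+h(−1)) ≤ y ≤ 3/x²} ∪ ({0} × [1/h(−1), ∞)). In particular, for each fixed x with 0 < |x| ≤ 1 the vertical slice of g(Ω) is the interval [1/(x²+h(−1)), 3/x²], and the slice over x = 0 is the unbounded ray [1/h(−1), ∞). -/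
open Set Topology Filter

noncomputable section

section Aux

variable {h : ℝ → ℝ}

lemma hpos_of_neg (hnn : ∀ z ∈ Icc (-1 : ℝ) 1, 0 ≤ h z)
    (hzero : ∀ z ∈ Icc (-1 : ℝ) 1, (h z = 0 ↔ 0 ≤ z))
    {z : ℝ} (hz : z ∈ Icc (-1 : ℝ) 1) (hzneg : z < 0) : 0 < h z := by
  rcases lt_or_eq_of_le (hnn z hz) with hlt | heq
  · exact hlt
  · exact absurd ((hzero z hz).mp heq.symm) (not_le.mpr hzneg)

lemma hm1_pos (hnn : ∀ z ∈ Icc (-1 : ℝ) 1, 0 ≤ h z)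
    (hzero : ∀ z ∈ Icc (-1 : ℝ) 1, (h z = 0 ↔ 0 ≤ z)) : 0 < h (-1) :=
  hpos_of_neg hnn hzero ⟨le_refl _, by norm_num⟩ (by norm_num)

/-- Forward: value bounds for x ≠ 0. -/
lemma forward_ne (hanti : AntitoneOn h (Icc (-1 : ℝ) 1))
    (hnn : ∀ z ∈ Icc (-1 : ℝ) 1, 0 ≤ h z)
    {x z : ℝ} (hx : x ≠ 0) (hz : z ∈ Icc (-1 : ℝ) 1) :
    1 / (x ^ 2 + h (-1)) ≤ (z + 2) / (x ^ 2 + h z) ∧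
      (z + 2) / (x ^ 2 + h z) ≤ 3 / x ^ 2 := by
  have hx2 : 0 < x ^ 2 := by positivity
  have hm1 : (-1 : ℝ) ∈ Icc (-1 : ℝ) 1 := ⟨le_refl _, by norm_num⟩
  have hle : h z ≤ h (-1) := hanti hm1 hz hz.1
  have hd : 0 < x ^ 2 + h z := by have := hnn z hz; linarith
  constructor
  · exact div_le_div₀ (by linarith [hz.1]) (by linarith [hz.1]) hd (by linarith)
  · exact div_le_div₀ (by norm_num) (by linarith [hz.2]) hx2 (by linarith [hnn z hz])

/-- Forward: value bound for x = 0, z < 0. -/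
lemma forward_zero (hanti : AntitoneOn h (Icc (-1 : ℝ) 1))
    (hnn : ∀ z ∈ Icc (-1 : ℝ) 1, 0 ≤ h z)
    (hzero : ∀ z ∈ Icc (-1 : ℝ) 1, (h z = 0 ↔ 0 ≤ z))
    {z : ℝ} (hz : z ∈ Icc (-1 : ℝ) 1) (hzneg : z < 0) :
    1 / h (-1) ≤ (z + 2) / ((0:ℝ) ^ 2 + h z) := by
  have hm1 : (-1 : ℝ) ∈ Icc (-1 : ℝ) 1 := ⟨le_refl _, by norm_num⟩
  have hd : 0 < h z := hpos_of_neg hnn hzero hz hzneg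
  have hle : h z ≤ h (-1) := hanti hm1 hz hz.1
  have : (0:ℝ) ^ 2 + h z = h z := by ring
  rw [this]
  exact div_le_div₀ (by linarith [hz.1]) (by linarith [hz.1]) hd hle

/-- Backward for x ≠ 0 : IVT gives a preimage point. -/
lemma backward_ne (hcont : ContinuousOn h (Icc (-1 : ℝ) 1))
    (hnn : ∀ z ∈ Icc (-1 : ℝ) 1, 0 ≤ h z)
    (hzero : ∀ z ∈ Icc (-1 : ℝ) 1, (h z = 0 ↔ 0 ≤ z))
    {x y : ℝ} (hx : x ≠ 0)
    (hy : y ∈ Icc (1 / (x ^ 2 + h (-1))) (3 / x ^ 2)) :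
    ∃ z ∈ Icc (-1 : ℝ) 1, (z + 2) / (x ^ 2 + h z) = y := by
  have hx2 : 0 < x ^ 2 := by positivity
  set f : ℝ → ℝ := fun z => (z + 2) / (x ^ 2 + h z) with hf
  have hfc : ContinuousOn f (Icc (-1 : ℝ) 1) := by
    apply ContinuousOn.div
    · exact (continuousOn_id.add continuousOn_const)
    · exact continuousOn_const.add hcont
    · intro z hz
      have := hnn z hz
      positivity
  have h1 : h 1 = 0 := (hzero 1 ⟨by norm_num, le_refl _⟩).mpr (by norm_num)
  have hfa : f (-1) = 1 / (x ^ 2 + h (-1)) := by norm_num [hf]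
  have hfb : f 1 = 3 / x ^ 2 := by norm_num [hf, h1]
  have := intermediate_value_Icc (by norm_num : (-1:ℝ) ≤ 1) hfc
  rw [hfa, hfb] at this
  obtain ⟨z, hz, hfz⟩ := this hy
  exact ⟨z, hz, hfz⟩

/-- Backward for x = 0. -/
lemma backward_zero (hcont : ContinuousOn h (Icc (-1 : ℝ) 1))
    (hanti : AntitoneOn h (Icc (-1 : ℝ) 1))
    (hnn : ∀ z ∈ Icc (-1 : ℝ) 1, 0 ≤ h z)
    (hzero : ∀ z ∈ Icc (-1 : ℝ) 1, (h z = 0 ↔ 0 ≤ z))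
    {y : ℝ} (hy : 1 / h (-1) ≤ y) :
    ∃ z, z ∈ Icc (-1 : ℝ) 1 ∧ z < 0 ∧ (z + 2) / ((0:ℝ) ^ 2 + h z) = y := by
  have hm1 : 0 < h (-1) := hm1_pos hnn hzero
  have hypos : 0 < y := lt_of_lt_of_le (by positivity) hy
  -- find c ∈ [-1,0) with h c < 1/y
  have h0 : h 0 = 0 := (hzero 0 ⟨by norm_num, by norm_num⟩).mpr le_rfl
  have hcw : ContinuousWithinAt h (Ico (-1 : ℝ) 0) 0 := by
    refine (hcont 0 ⟨by norm_num, by norm_num⟩).mono ?_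
    intro z hz; exact ⟨hz.1, hz.2.le.trans (by norm_num)⟩
  have hnb : (𝓝[Ico (-1 : ℝ) 0] (0:ℝ)).NeBot := by
    rw [← mem_closure_iff_nhdsWithin_neBot, closure_Ico (by norm_num : (-1:ℝ) ≠ 0)]
    exact ⟨by norm_num, le_rfl⟩
  have hev : ∀ᶠ z in 𝓝[Ico (-1 : ℝ) 0] (0:ℝ), h z < 1 / y := by
    have : Set.Iio (1 / y) ∈ 𝓝 (h 0) := by
      rw [h0]; exact Iio_mem_nhds (by positivity)
    exact hcw this
  obtain ⟨c, hc1, hc2⟩ := (hev.and (eventually_mem_nhdsWithin)).exists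
  -- c ∈ Ico (-1) 0, h c < 1/y
  have hcneg : c < 0 := hc2.2
  have hcmem : c ∈ Icc (-1 : ℝ) 1 := ⟨hc2.1, by linarith⟩
  have hcpos : 0 < h c := hpos_of_neg hnn hzero hcmem hcneg
  have hyc : y < 1 / h c := by
    rw [lt_div_iff₀ hcpos]
    calc y * h c < y * (1 / y) := by
          apply mul_lt_mul_of_pos_left hc1 hypos
      _ = 1 := by field_simp
  have hyc2 : y ≤ (c + 2) / ((0:ℝ) ^ 2 + h c) := by
    have : (0:ℝ) ^ 2 + h c = h c := by ring
    rw [this]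
    calc y ≤ 1 / h c := hyc.le
      _ ≤ (c + 2) / h c := div_le_div₀ (by linarith [hcmem.1]) (by linarith [hcmem.1]) hcpos le_rfl
  -- IVT on [-1, c]
  set f : ℝ → ℝ := fun z => (z + 2) / ((0:ℝ) ^ 2 + h z) with hf
  have hsub : Icc (-1 : ℝ) c ⊆ Icc (-1 : ℝ) 1 := Icc_subset_Icc le_rfl (by linarith)
  have hfc : ContinuousOn f (Icc (-1 : ℝ) c) := by
    apply ContinuousOn.div
    · exact (continuousOn_id.add continuousOn_const)
    · exact continuousOn_const.add (hcont.mono hsub)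
    · intro z hz
      have hzpos : 0 < h z :=
        hpos_of_neg hnn hzero (hsub hz) (lt_of_le_of_lt hz.2 hcneg)
      positivity
  have hfa : f (-1) = 1 / h (-1) := by norm_num [hf]
  have := intermediate_value_Icc (by linarith [hc2.1] : (-1:ℝ) ≤ c) hfc
  rw [hfa] at this
  obtain ⟨z, hz, hfz⟩ := this ⟨hy, hyc2⟩
  exact ⟨z, hsub hz, lt_of_le_of_lt hz.2 hcneg, hfz⟩

end Aux

/-- Let `h : [−1,1] → ℝ` be continuous, nonincreasing, with `h ≥ 0` and
`h(z) = 0 ↔ z ≥ 0`, and let `g(z₁,z₂) = (z₁,(z₂+2)/(z₁²+h(z₂)))`. Then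
`g(Ω) = {(x,y) : 0 < |x| ≤ 1, 1/(x²+h(−1)) ≤ y ≤ 3/x²} ∪ ({0} × [1/h(−1),∞))`.
In particular, for `0 < |x| ≤ 1` the vertical slice of `g(Ω)` is the interval
`[1/(x²+h(−1)), 3/x²]`, and the slice over `x = 0` is the ray `[1/h(−1),∞)`. -/
theorem image_of_g (h : ℝ → ℝ)
    (hcont : ContinuousOn h (Icc (-1 : ℝ) 1))
    (hanti : AntitoneOn h (Icc (-1 : ℝ) 1))
    (hnn : ∀ z ∈ Icc (-1 : ℝ) 1, 0 ≤ h z)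
    (hzero : ∀ z ∈ Icc (-1 : ℝ) 1, (h z = 0 ↔ 0 ≤ z)) :
    let g : ℝ × ℝ → ℝ × ℝ := fun p => (p.1, (p.2 + 2) / (p.1 ^ 2 + h p.2))
    g '' Omeg =
      {p : ℝ × ℝ | 0 < |p.1| ∧ |p.1| ≤ 1 ∧
          1 / (p.1 ^ 2 + h (-1)) ≤ p.2 ∧ p.2 ≤ 3 / p.1 ^ 2} ∪
        ({0} ×ˢ Ici (1 / h (-1))) ∧
    (∀ x : ℝ, 0 < |x| → |x| ≤ 1 →
      {y : ℝ | (x, y) ∈ g '' Omeg} = Icc (1 / (x ^ 2 + h (-1))) (3 / x ^ 2)) ∧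
    {y : ℝ | ((0 : ℝ), y) ∈ g '' Omeg} = Ici (1 / h (-1)) := by

  intro g
  have hmain : g '' Omeg =
      {p : ℝ × ℝ | 0 < |p.1| ∧ |p.1| ≤ 1 ∧
          1 / (p.1 ^ 2 + h (-1)) ≤ p.2 ∧ p.2 ≤ 3 / p.1 ^ 2} ∪
        ({0} ×ˢ Ici (1 / h (-1))) := by
    ext p
    constructor
    · rintro ⟨⟨z1, z2⟩, ⟨⟨hz1, hz2⟩, hnot⟩, rfl⟩
      simp only [mem_prod, mem_Icc] at hz1 hz2
      by_cases hz1z : z1 = 0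
      · right
        subst hz1z
        have hz2neg : z2 < 0 := by
          by_contra hc
          exact hnot ⟨rfl, ⟨le_of_not_gt hc, hz2.2⟩⟩
        refine ⟨rfl, forward_zero hanti hnn hzero ⟨hz2.1, hz2.2⟩ hz2neg⟩
      · left
        obtain ⟨hl, hr⟩ := forward_ne hanti hnn hz1z (⟨hz2.1, hz2.2⟩ : z2 ∈ Icc (-1:ℝ) 1)
        exact ⟨abs_pos.mpr hz1z, abs_le.mpr ⟨hz1.1, hz1.2⟩, hl, hr⟩
    · rintro (⟨hp1, hp2, hp3, hp4⟩ | ⟨hp1, hp2⟩)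
      · have hx : p.1 ≠ 0 := by
          intro e; rw [e] at hp1; simp at hp1
        obtain ⟨z, hz, hfz⟩ := backward_ne hcont hnn hzero hx ⟨hp3, hp4⟩
        refine ⟨(p.1, z), ⟨⟨abs_le.mp hp2, hz⟩, ?_⟩, ?_⟩
        · rintro ⟨e, -⟩; exact hx e
        · simp only [g]; exact Prod.ext rfl hfz
      · simp only [mem_singleton_iff] at hp1
        obtain ⟨z, hz, hzneg, hfz⟩ := backward_zero hcont hanti hnn hzero hp2
        refine ⟨(0, z), ⟨⟨by norm_num, hz⟩, ?_⟩, ?_⟩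
        · rintro ⟨-, hzi⟩; exact absurd hzi.1 (not_le.mpr hzneg)
        · simp only [g]
          exact Prod.ext hp1.symm hfz
  refine ⟨hmain, ?_, ?_⟩
  · intro x hx hx1
    ext y
    simp only [mem_setOf_eq, hmain, mem_union, mem_prod, mem_singleton_iff, mem_Ici,
      mem_Icc, mem_setOf_eq]
    constructor
    · rintro (⟨-, -, h3, h4⟩ | ⟨e, -⟩)
      · exact ⟨h3, h4⟩
      · rw [e] at hx; simp at hx
    · intro hy
      exact Or.inl ⟨hx, hx1, hy.1, hy.2⟩
  · ext y
    simp only [mem_setOf_eq, hmain, mem_union, mem_prod, mem_singleton_iff, mem_Ici,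
      mem_setOf_eq]
    constructor
    · rintro (⟨h1, -⟩ | ⟨-, h2⟩)
      · simp at h1
      · exact h2
    · intro hy
      exact Or.inr ⟨trivial, hy⟩
end
end
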